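/- Incompleteness of the power spectrum: for every n ≥ 3 there exist two functions f, g : ZMod n → ℂ with identical power spectra (|f̂(k)| = |ĝ(k)| for all k) such that g is not a cyclic translate of f. -/

import Mathlib

open Complex Finset

/-- Discrete Fourier transform of a signal on `ZMod n`. -/
noncomputable def dft (n : ℕ) [NeZero n] (f : ZMod n → ℂ) (k : ZMod n) : ℂ :=
  ∑ g : ZMod n, Complex.exp (-2 * Real.pi * Complex.I * k.val * g.val / n) * f g

/-- Incompleteness of the power spectrum: for every `n ≥ 3` there exist signals `f, g`
with identical power spectra such that `g` is not a cyclic translate of `f`. -/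
theorem powerSpectrum_incomplete (n : ℕ) (hn : 3 ≤ n) [NeZero n] :
    ∃ f g : ZMod n → ℂ,
      (∀ k : ZMod n, ‖dft n f k‖ = ‖dft n g k‖) ∧
      ¬ ∃ t : ZMod n, ∀ x : ZMod n, g x = f (x - t) := by
  have hn0 : (n : ℂ) ≠ 0 := Nat.cast_ne_zero.mpr (NeZero.ne n)
  set f : ZMod n → ℂ := fun x => if x = 0 then 1 else if x = 1 then Complex.I else 0 with hf
  refine ⟨f, fun x => starRingEnd ℂ (f (-x)), ?_, ?_⟩
  · intro k
    have hg : dft n (fun x => starRingEnd ℂ (f (-x))) k = starRingEnd ℂ (dft n f k) := by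
      unfold dft
      rw [map_sum]
      refine Fintype.sum_equiv (Equiv.neg (ZMod n)) _ _ fun x => ?_
      simp only [Equiv.neg_apply, neg_neg, map_mul]
      congr 1
      rw [← Complex.exp_conj]
      simp only [map_div₀, map_mul, map_neg, map_ofNat, Complex.conj_I,
        Complex.conj_natCast, Complex.conj_ofReal]
      rw [Complex.exp_eq_exp_iff_exists_int]
      rcases eq_or_ne x 0 with h0 | h0
      · subst h0; exact ⟨0, by simp⟩
      · refine ⟨-(k.val : ℤ), ?_⟩
        have hval : (((-x).val : ℕ) : ℂ) = (n : ℂ) - (x.val : ℂ) := by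
          rw [ZMod.neg_val, if_neg h0]
          push_cast [le_of_lt (ZMod.val_lt x)]
          ring
        rw [hval]
        field_simp
        push_cast
        ring
    rw [hg, Complex.norm_conj]
  · rintro ⟨t, ht⟩
    have h2 : (2 : ZMod n) ≠ 0 := by
      intro h
      have h2' : ((2 : ℕ) : ZMod n) = 0 := by push_cast; exact h
      have hd := (ZMod.natCast_eq_zero_iff 2 n).mp h2'
      have := Nat.le_of_dvd (by norm_num) hd
      omega
    have h1 : (1 : ZMod n) ≠ 0 := by
      intro h
      have h1' : ((1 : ℕ) : ZMod n) = 0 := by push_cast; exact h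
      have hd := (ZMod.natCast_eq_zero_iff 1 n).mp h1'
      have := Nat.le_of_dvd (by norm_num) hd
      omega
    have ht0 : t = 0 := by
      have := ht t
      simp only [sub_self, hf, if_pos rfl] at this
      by_contra hne
      have hmt : -t ≠ 0 := by simpa [neg_eq_zero] using hne
      rcases eq_or_ne (-t) 1 with h1t | h1t
      · rw [if_neg hmt, if_pos h1t] at this
        simp [Complex.ext_iff] at this
      · rw [if_neg hmt, if_neg h1t] at this
        simp at this
    subst ht0
    have := ht 1
    have hm1 : (-1 : ZMod n) ≠ 0 := by
      intro h; exact h1 (by rwa [neg_eq_zero] at h)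
    have hm1' : (-1 : ZMod n) ≠ 1 := by
      intro h
      exact h2 (by linear_combination -h)
    simp only [sub_zero, hf, if_neg hm1, if_neg hm1', if_neg h1, if_pos rfl] at this
    simp [Complex.ext_iff] at this
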